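/- Let F be a bounded family in L²(ℝ^N). Then F is relatively compact in L²(ℝ^N) if and only if both of the following hold: (i) the family of Fourier transforms F̂ = {f̂ : f ∈ F} is L²-equicontinuous, i.e. for every ε > 0 there exists an open neighbourhood U₀ of 0 in ℝ^N such that for all y ∈ U₀ and all f ∈ F one has ∫_{ℝ^N} |f̂(x+y) − f̂(x)|² dx < ε; and (ii) F̂ is L²-equivanishing, i.e. for every ε > 0 there exists a compact set K ⊂ ℝ^N such that for all f ∈ F one has ∫_{ℝ^N∖K} |f̂(x)|² dx < ε. -/

import Mathlib

set_option maxHeartbeats 2000000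

open MeasureTheory Real Complex Set Filter
open scoped FourierTransform ENNReal Topology

section PegoHelpers

variable {α : Type*} [MeasurableSpace α] {ν : Measure α}




lemma peLp_eq {u : α → ℂ} :
    eLpNorm u 2 ν = (∫⁻ x, (‖u x‖₊ : ℝ≥0∞) ^ 2 ∂ν) ^ (1/2 : ℝ) := by
  rw [eLpNorm_eq_lintegral_rpow_enorm_toReal two_ne_zero ENNReal.ofNat_ne_top]
  norm_num [enorm_eq_nnnorm]

lemma pD_eq {u : α → ℂ} :
    (∫⁻ x, (‖u x‖₊ : ℝ≥0∞) ^ 2 ∂ν) = (eLpNorm u 2 ν) ^ 2 := by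
  rw [peLp_eq, ← ENNReal.rpow_natCast (_ ^ (1/2:ℝ)) 2, ← ENNReal.rpow_mul]
  norm_num

lemma pD_ne_top {u : α → ℂ} (hu : MemLp u 2 ν) :
    (∫⁻ x, (‖u x‖₊ : ℝ≥0∞) ^ 2 ∂ν) ≠ ∞ := by
  rw [pD_eq]; exact (ENNReal.pow_lt_top hu.2.lt_top).ne

lemma psq_int_sq {u : α → ℂ} (hu : MemLp u 2 ν) :
    ∫ x, ‖u x‖ ^ 2 ∂ν = ((eLpNorm u 2 ν).toReal) ^ 2 := by
  rw [hu.eLpNorm_eq_integral_rpow_norm two_ne_zero ENNReal.ofNat_ne_top]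
  have h2 : (2 : ℝ≥0∞).toReal = 2 := by simp
  rw [h2, ENNReal.toReal_ofReal (by positivity)]
  have hnn : 0 ≤ ∫ x, ‖u x‖ ^ (2:ℝ) ∂ν := by positivity
  rw [← Real.rpow_natCast ((∫ x, ‖u x‖ ^ (2:ℝ) ∂ν) ^ (2:ℝ)⁻¹) 2, ← Real.rpow_mul hnn]
  norm_num

lemma psq_int_lt_iff {u : α → ℂ} (hu : MemLp u 2 ν) {ε : ℝ} (hε : 0 < ε) :
    (∫ x, ‖u x‖ ^ 2 ∂ν) < ε ↔ eLpNorm u 2 ν < ENNReal.ofReal (Real.sqrt ε) := by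
  rw [psq_int_sq hu, ENNReal.lt_ofReal_iff_toReal_lt hu.2.ne, ← Real.lt_sqrt ENNReal.toReal_nonneg]

lemma pD_ofReal {u : α → ℂ} (hu : MemLp u 2 ν) :
    (∫⁻ x, (‖u x‖₊ : ℝ≥0∞) ^ 2 ∂ν) = ENNReal.ofReal (∫ x, ‖u x‖ ^ 2 ∂ν) := by
  rw [psq_int_sq hu, pD_eq, ← ENNReal.toReal_pow, ENNReal.ofReal_toReal]
  exact (ENNReal.pow_lt_top hu.2.lt_top).ne

lemma pcs (ν : Measure α) {u : α → ℝ≥0∞} (hu : AEMeasurable u ν) :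
    (∫⁻ a, u a ∂ν) ^ 2 ≤ (∫⁻ a, u a ^ 2 ∂ν) * ν Set.univ := by
  have hpq : Real.HolderConjugate 2 2 := Real.HolderConjugate.two_two
  have h := ENNReal.lintegral_mul_le_Lp_mul_Lq ν hpq hu
    (aemeasurable_const (b := (1:ℝ≥0∞)))
  simp only [Pi.mul_apply, mul_one, ENNReal.one_rpow, lintegral_const, one_mul] at h
  have h2 := pow_le_pow_left₀ zero_le h 2
  refine h2.trans (le_of_eq ?_)
  rw [mul_pow, ← ENNReal.rpow_natCast (_ ^ (1/(2:ℝ))) 2, ← ENNReal.rpow_mul,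
    ← ENNReal.rpow_natCast ((ν Set.univ) ^ (1/(2:ℝ))) 2, ← ENNReal.rpow_mul]
  norm_num


lemma ptb_approx {X : Type*} [PseudoMetricSpace X] {s : Set X}
    (h : ∀ ε > (0:ℝ), ∃ t : Set X, TotallyBounded t ∧ ∀ x ∈ s, ∃ y ∈ t, dist x y ≤ ε) :
    TotallyBounded s := by
  rw [Metric.totallyBounded_iff]
  intro ε hε
  obtain ⟨t, ht, hst⟩ := h (ε/3) (by positivity)
  obtain ⟨u, hu, htu⟩ := Metric.totallyBounded_iff.1 ht (ε/3) (by positivity)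
  refine ⟨u, hu, fun x hx => ?_⟩
  obtain ⟨y, hyt, hxy⟩ := hst x hx
  obtain ⟨z, hz, hyz⟩ := Set.mem_iUnion₂.1 (htu hyt)
  refine Set.mem_iUnion₂.2 ⟨z, hz, ?_⟩
  have : dist x z < ε := by
    calc dist x z ≤ dist x y + dist y z := dist_triangle x y z
    _ < ε/3 + ε/3 := by
        exact add_lt_add_of_le_of_lt hxy (Metric.mem_ball.1 hyz)
    _ < ε := by linarith
  exact Metric.mem_ball.2 this

lemma ptb_findim {X : Type*} [NormedAddCommGroup X] [NormedSpace ℂ X] {s : Set X} {M : ℝ}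
    (hM : ∀ x ∈ s, ‖x‖ ≤ M)
    (h : ∀ ε > (0:ℝ), ∃ V : Submodule ℂ X, FiniteDimensional ℂ V ∧
      ∀ x ∈ s, ∃ v ∈ V, ‖x - v‖ ≤ ε) :
    TotallyBounded s := by
  apply ptb_approx
  intro ε hε
  obtain ⟨V, hV, happrox⟩ := h ε hε
  haveI := hV
  refine ⟨(↑) '' (Metric.closedBall (0 : V) (M + ε)), ?_, ?_⟩
  · exact ((isCompact_closedBall (0:V) (M+ε)).image continuous_subtype_val).totallyBounded
  · intro x hx
    obtain ⟨v, hvV, hxv⟩ := happrox x hx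
    refine ⟨v, ⟨⟨v, hvV⟩, ?_, rfl⟩, by rwa [dist_eq_norm]⟩
    rw [Metric.mem_closedBall, dist_zero_right]
    show ‖v‖ ≤ M + ε
    calc ‖v‖ ≤ ‖x‖ + ‖x - v‖ := by
          have h1 : ‖v‖ - ‖x‖ ≤ ‖v - x‖ := norm_sub_norm_le v x
          have h2 : ‖v - x‖ = ‖x - v‖ := norm_sub_rev v x
          linarith
    _ ≤ M + ε := add_le_add (hM x hx) hxv

end PegoHelpers

section PegoTail
variable {X : Type*} [NormedAddCommGroup X] [MeasurableSpace X] [OpensMeasurableSpace X]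
  {ν : Measure X}

lemma ptail {u : X → ℂ} (hu : MemLp u 2 ν) {η : ℝ} (hη : 0 < η) :
    ∃ n : ℕ, (∫⁻ x in (Metric.closedBall (0:X) n)ᶜ, (‖u x‖₊:ℝ≥0∞)^2 ∂ν) < ENNReal.ofReal η := by
  have hm := hu.aestronglyMeasurable
  set u' := hm.mk u with hu'
  have hmeas : Measurable fun x => (‖u' x‖₊ : ℝ≥0∞) ^ 2 :=
    (hm.stronglyMeasurable_mk.measurable.nnnorm.coe_nnreal_ennreal).pow_const 2
  have hcongr : (fun x => (‖u x‖₊ : ℝ≥0∞) ^ 2) =ᵐ[ν] fun x => (‖u' x‖₊ : ℝ≥0∞) ^ 2 :=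
    hm.ae_eq_mk.mono fun x hx => by simp only [hx, hu']
  set w := ν.withDensity (fun x => (‖u' x‖₊ : ℝ≥0∞) ^ 2) with hw
  have hwuniv : w Set.univ ≠ ∞ := by
    rw [hw, withDensity_apply _ MeasurableSet.univ, setLIntegral_univ,
      ← lintegral_congr_ae hcongr]
    exact pD_ne_top hu
  haveI : IsFiniteMeasure w := ⟨hwuniv.lt_top⟩
  have hanti : Antitone fun n : ℕ => (Metric.closedBall (0:X) n)ᶜ := by
    intro a b hab
    exact Set.compl_subset_compl.2 (Metric.closedBall_subset_closedBall (by exact_mod_cast hab))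
  have hinter : ⋂ n : ℕ, (Metric.closedBall (0:X) n)ᶜ = ∅ := by
    rw [← Set.compl_iUnion, Set.compl_empty_iff]
    ext x
    simp only [Set.mem_iUnion, Metric.mem_closedBall, dist_zero_right, Set.mem_univ, iff_true]
    obtain ⟨n, hn⟩ := exists_nat_ge ‖x‖
    exact ⟨n, hn⟩
  have htend := tendsto_measure_iInter_atTop (μ := w)
    (fun n => (measurableSet_closedBall.compl : MeasurableSet _).nullMeasurableSet)
    hanti ⟨0, (measure_lt_top w _).ne⟩
  rw [hinter, measure_empty] at htend
  have hev : ∀ᶠ n : ℕ in atTop, w (Metric.closedBall (0:X) n)ᶜ < ENNReal.ofReal η := by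
    have : (Set.Iio (ENNReal.ofReal η)) ∈ 𝓝 (0:ℝ≥0∞) :=
      Iio_mem_nhds (by simpa using hη)
    exact htend.eventually this
  obtain ⟨n, hn⟩ := hev.exists
  refine ⟨n, ?_⟩
  have hwn : w (Metric.closedBall (0:X) n)ᶜ
      = ∫⁻ x in (Metric.closedBall (0:X) n)ᶜ, (‖u' x‖₊ : ℝ≥0∞) ^ 2 ∂ν :=
    withDensity_apply _ measurableSet_closedBall.compl
  rw [hwn] at hn
  rwa [lintegral_congr_ae (ae_restrict_of_ae hcongr)]

end PegoTail

section PegoGrid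
variable {N : ℕ}



lemma pgrid (δ : ℝ) (hδ : 0 < δ) (k : Fin N → ℤ) (x : EuclideanSpace ℝ (Fin N)) :
    x ∈ {x : EuclideanSpace ℝ (Fin N) | ∀ i, x i ∈ Set.Ico (k i * δ) ((k i + 1) * δ)}
      ↔ (fun i => ⌊x i / δ⌋) = k := by
  constructor
  · intro hx
    funext i
    obtain ⟨h1, h2⟩ := hx i
    rw [Int.floor_eq_iff]
    constructor
    · rwa [le_div_iff₀ hδ]
    · rw [div_lt_iff₀ hδ]; push_cast; linarith
  · intro hk
    intro i
    have : ⌊x i / δ⌋ = k i := congrFun hk i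
    obtain ⟨h1, h2⟩ := Int.floor_eq_iff.1 this
    constructor
    · rwa [← le_div_iff₀ hδ]
    · rw [← div_lt_iff₀ hδ]; push_cast at h2 ⊢; linarith

lemma pQvol (δ : ℝ) (hδ : 0 < δ) (k : Fin N → ℤ) :
    volume {x : EuclideanSpace ℝ (Fin N) | ∀ i, x i ∈ Set.Ico (k i * δ) ((k i + 1) * δ)}
      = ENNReal.ofReal δ ^ N := by
  have hpre : {x : EuclideanSpace ℝ (Fin N) | ∀ i, x i ∈ Set.Ico (k i * δ) ((k i + 1) * δ)}
      = ((MeasurableEquiv.toLp 2 (Fin N → ℝ)).symm) ⁻¹'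
        (Set.univ.pi fun i => Set.Ico (k i * δ) ((k i + 1) * δ)) := by
    ext x
    simp [MeasurableEquiv.coe_toLp_symm, Set.mem_pi]
  rw [hpre, MeasurePreserving.measure_preimage
    (EuclideanSpace.volume_preserving_symm_measurableEquiv_toLp (Fin N))
    ((MeasurableSet.univ_pi fun i => measurableSet_Ico).nullMeasurableSet),
    volume_pi_pi]
  have : ∀ i : Fin N, volume (Set.Ico (k i * δ) ((k i + 1) * δ)) = ENNReal.ofReal δ := by
    intro i
    rw [Real.volume_Ico]
    congr 1
    push_cast
    ring
  simp [this]

lemma pCyvol (δ : ℝ) (hδ : 0 < δ) :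
    volume {y : EuclideanSpace ℝ (Fin N) | ∀ i, |y i| < δ}
      = ENNReal.ofReal (2*δ) ^ N := by
  have hpre : {y : EuclideanSpace ℝ (Fin N) | ∀ i, |y i| < δ}
      = ((MeasurableEquiv.toLp 2 (Fin N → ℝ)).symm) ⁻¹' (Set.univ.pi fun _ => Set.Ioo (-δ) δ) := by
    ext y
    simp [MeasurableEquiv.coe_toLp_symm, Set.mem_pi, abs_lt, and_comm]
  rw [hpre, MeasurePreserving.measure_preimage
    (EuclideanSpace.volume_preserving_symm_measurableEquiv_toLp (Fin N))
    ((MeasurableSet.univ_pi fun _ => measurableSet_Ioo).nullMeasurableSet),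
    volume_pi_pi]
  have h2 : ENNReal.ofReal (δ + δ) = ENNReal.ofReal (2*δ) := by congr 1; ring
  simp [Real.volume_Ioo, h2]

lemma pQmeas (δ : ℝ) (k : Fin N → ℤ) :
    MeasurableSet {x : EuclideanSpace ℝ (Fin N) | ∀ i, x i ∈ Set.Ico (k i * δ) ((k i + 1) * δ)} := by
  have : {x : EuclideanSpace ℝ (Fin N) | ∀ i, x i ∈ Set.Ico (k i * δ) ((k i + 1) * δ)}
      = ⋂ i, {x : EuclideanSpace ℝ (Fin N) | x i ∈ Set.Ico (k i * δ) ((k i + 1) * δ)} := by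
    ext x; simp [Set.mem_iInter]
  rw [this]
  exact MeasurableSet.iInter fun i =>
    (measurableSet_Ico).preimage
      ((measurable_pi_apply i).comp ((MeasurableEquiv.toLp 2 (Fin N → ℝ)).symm).measurable)

lemma pCymeas (δ : ℝ) :
    MeasurableSet {y : EuclideanSpace ℝ (Fin N) | ∀ i, |y i| < δ} := by
  have : {y : EuclideanSpace ℝ (Fin N) | ∀ i, |y i| < δ}
      = ⋂ i, {y : EuclideanSpace ℝ (Fin N) | |y i| < δ} := by
    ext y; simp [Set.mem_iInter]
  rw [this]
  exact MeasurableSet.iInter fun i =>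
    measurableSet_lt (by fun_prop) measurable_const

lemma pcoord_le_norm (x : EuclideanSpace ℝ (Fin N)) (i : Fin N) : |x i| ≤ ‖x‖ := by
  rw [EuclideanSpace.norm_eq, ← Real.sqrt_sq (abs_nonneg (x i))]
  apply Real.sqrt_le_sqrt
  have : |x i| ^ 2 = ‖x i‖ ^ 2 := by rw [Real.norm_eq_abs]
  rw [this]
  exact Finset.single_le_sum (f := fun j => ‖x j‖ ^ 2) (fun j _ => by positivity)
    (Finset.mem_univ i)

lemma pnorm_le (x : EuclideanSpace ℝ (Fin N)) (δ : ℝ) (hδ : 0 ≤ δ) (h : ∀ i, |x i| ≤ δ) :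
    ‖x‖ ≤ Real.sqrt N * δ := by
  rw [EuclideanSpace.norm_eq]
  have hsum : (∑ i, ‖x i‖ ^ 2) ≤ N * δ^2 := by
    calc (∑ i, ‖x i‖ ^ 2) ≤ ∑ _i : Fin N, δ^2 := by
          apply Finset.sum_le_sum
          intro i _
          rw [Real.norm_eq_abs]
          exact pow_le_pow_left₀ (abs_nonneg _) (h i) 2
      _ = N * δ^2 := by simp [Finset.sum_const, mul_comm]
  calc Real.sqrt (∑ i, ‖x i‖ ^ 2) ≤ Real.sqrt (N * δ^2) := Real.sqrt_le_sqrt hsum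
    _ = Real.sqrt N * δ := by
        rw [Real.sqrt_mul (Nat.cast_nonneg N), Real.sqrt_sq hδ]


end PegoGrid

lemma pjensen {N : ℕ} {δ : ℝ} (hδ : 0 < δ) (k : Fin N → ℤ)
    {g' : EuclideanSpace ℝ (Fin N) → ℂ} (hg'm : StronglyMeasurable g')
    (hgint : IntegrableOn g' {x : EuclideanSpace ℝ (Fin N) |
      ∀ i, x i ∈ Set.Ico (k i * δ) ((k i + 1) * δ)} volume)
    (c : ℂ)
    (hc : (∫ z in {x : EuclideanSpace ℝ (Fin N) |
        ∀ i, x i ∈ Set.Ico (k i * δ) ((k i + 1) * δ)}, g' z ∂volume) = (δ^N : ℝ) • c)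
    (x : EuclideanSpace ℝ (Fin N)) :
    (‖g' x - c‖₊ : ℝ≥0∞)^2 ≤ (ENNReal.ofReal δ ^ N)⁻¹ *
      ∫⁻ z in {x : EuclideanSpace ℝ (Fin N) |
        ∀ i, x i ∈ Set.Ico (k i * δ) ((k i + 1) * δ)}, (‖g' x - g' z‖₊:ℝ≥0∞)^2 ∂volume := by
  set Q := {x : EuclideanSpace ℝ (Fin N) | ∀ i, x i ∈ Set.Ico (k i * δ) ((k i + 1) * δ)} with hQ
  set A := ENNReal.ofReal δ ^ N with hA
  have hμQ : volume Q = A := pQvol δ hδ k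
  have hδN : (0:ℝ) < δ ^ N := pow_pos hδ N
  have hA0 : A ≠ 0 := by
    rw [hA]; exact pow_ne_zero N (ENNReal.ofReal_pos.2 hδ).ne'
  have hAtop : A ≠ ∞ := by
    rw [hA]; exact (ENNReal.pow_lt_top ENNReal.ofReal_lt_top).ne
  haveI : IsFiniteMeasure (volume.restrict Q) := by
    constructor
    rw [Measure.restrict_apply_univ, hμQ]
    exact hAtop.lt_top
  have hIntdiff : Integrable (fun z => g' x - g' z) (volume.restrict Q) :=
    (integrable_const _).sub hgint
  have havg : (∫ z in Q, (g' x - g' z) ∂volume) = (δ^N : ℝ) • (g' x - c) := by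
    rw [integral_sub (integrable_const _) hgint, setIntegral_const, hc, measureReal_def, hμQ, smul_sub]
    congr 2
    rw [hA, ENNReal.toReal_pow, ENNReal.toReal_ofReal hδ.le]
  have hrepr : g' x - c = (δ^N : ℝ)⁻¹ • ∫ z in Q, (g' x - g' z) ∂volume := by
    rw [havg, smul_smul, inv_mul_cancel₀ hδN.ne', one_smul]
  have hnorm : ‖g' x - c‖ ≤ (δ^N)⁻¹ * ∫ z in Q, ‖g' x - g' z‖ ∂volume := by
    rw [hrepr, norm_smul, Real.norm_eq_abs, abs_of_pos (inv_pos.2 hδN)]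
    exact mul_le_mul_of_nonneg_left (norm_integral_le_integral_norm _) (inv_nonneg.2 hδN.le)
  have hlift : (‖g' x - c‖₊ : ℝ≥0∞) ≤ A⁻¹ * ∫⁻ z in Q, (‖g' x - g' z‖₊:ℝ≥0∞) ∂volume := by
    rw [← enorm_eq_nnnorm, ← ofReal_norm_eq_enorm]
    calc ENNReal.ofReal ‖g' x - c‖
        ≤ ENNReal.ofReal ((δ^N)⁻¹ * ∫ z in Q, ‖g' x - g' z‖ ∂volume) :=
          ENNReal.ofReal_le_ofReal hnorm
      _ = ENNReal.ofReal ((δ^N)⁻¹)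
          * ENNReal.ofReal (∫ z in Q, ‖g' x - g' z‖ ∂volume) :=
          ENNReal.ofReal_mul (inv_nonneg.2 hδN.le)
      _ = A⁻¹ * ∫⁻ z in Q, (‖g' x - g' z‖₊:ℝ≥0∞) ∂volume := by
          simp only [ofReal_integral_norm_eq_lintegral_enorm hIntdiff, enorm_eq_nnnorm,
            ENNReal.ofReal_inv_of_pos hδN, ENNReal.ofReal_pow hδ.le, hA]
  have hsq := pow_le_pow_left₀ zero_le hlift 2
  have hmeas : AEMeasurable (fun z => (‖g' x - g' z‖₊ : ℝ≥0∞)) (volume.restrict Q) :=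
    ((stronglyMeasurable_const.sub hg'm).measurable.nnnorm.coe_nnreal_ennreal).aemeasurable
  have hCS := pcs (volume.restrict Q) hmeas
  rw [Measure.restrict_apply_univ, hμQ] at hCS
  calc (‖g' x - c‖₊ : ℝ≥0∞)^2
      ≤ (A⁻¹ * ∫⁻ z in Q, (‖g' x - g' z‖₊:ℝ≥0∞) ∂volume)^2 := hsq
    _ = A⁻¹^2 * (∫⁻ z in Q, (‖g' x - g' z‖₊:ℝ≥0∞) ∂volume)^2 := mul_pow _ _ 2
    _ ≤ A⁻¹^2 * ((∫⁻ z in Q, (‖g' x - g' z‖₊:ℝ≥0∞)^2 ∂volume) * A) :=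
        mul_le_mul_right hCS _
    _ = A⁻¹ * ∫⁻ z in Q, (‖g' x - g' z‖₊:ℝ≥0∞)^2 ∂volume := by
        rw [sq A⁻¹]
        calc A⁻¹ * A⁻¹ * ((∫⁻ z in Q, (‖g' x - g' z‖₊:ℝ≥0∞)^2 ∂volume) * A)
            = (A⁻¹ * A) * (A⁻¹ * ∫⁻ z in Q, (‖g' x - g' z‖₊:ℝ≥0∞)^2 ∂volume) := by ring
          _ = A⁻¹ * ∫⁻ z in Q, (‖g' x - g' z‖₊:ℝ≥0∞)^2 ∂volume := by
              rw [ENNReal.inv_mul_cancel hA0 hAtop, one_mul]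

lemma pforward {N : ℕ} (G : Set (Lp ℂ 2 (volume : Measure (EuclideanSpace ℝ (Fin N)))))
    (hG : TotallyBounded G) :
    (∀ ε > (0 : ℝ), ∃ U : Set (EuclideanSpace ℝ (Fin N)), IsOpen U ∧ (0 : _) ∈ U ∧
        ∀ y ∈ U, ∀ g ∈ G,
          (∫ x, ‖(g : EuclideanSpace ℝ (Fin N) → ℂ) (x + y) -
            (g : EuclideanSpace ℝ (Fin N) → ℂ) x‖ ^ 2 ∂volume) < ε) ∧
      (∀ ε > (0 : ℝ), ∃ K : Set (EuclideanSpace ℝ (Fin N)), IsCompact K ∧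
        ∀ g ∈ G, (∫ x in Kᶜ, ‖(g : EuclideanSpace ℝ (Fin N) → ℂ) x‖ ^ 2 ∂volume) < ε) := by
  set E := EuclideanSpace ℝ (Fin N)
  set μ : Measure E := volume with hμ
  have hmp : ∀ y : E, MeasurePreserving (fun x => x + y) μ μ :=
    fun y => measurePreserving_add_right μ y
  set τ : E → Lp ℂ 2 μ → Lp ℂ 2 μ :=
    fun y => Lp.compMeasurePreserving (fun x => x + y) (hmp y) with hτ
  have hcoe : ∀ (y : E) (c : Lp ℂ 2 μ), ⇑(τ y c) =ᵐ[μ] fun x => c (x + y) :=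
    fun y c => Lp.coeFn_compMeasurePreserving c (hmp y)
  have hτnorm : ∀ (y : E) (c : Lp ℂ 2 μ), ‖τ y c‖ = ‖c‖ :=
    fun y c => Lp.norm_compMeasurePreserving c (hmp y)
  have hτsub : ∀ (y : E) (c d : Lp ℂ 2 μ), τ y c - τ y d = τ y (c - d) :=
    fun y c d => (map_sub (Lp.compMeasurePreserving (fun x => x + y) (hmp y)) c d).symm
  have hcont : ∀ c : Lp ℂ 2 μ, Continuous fun y : E => τ y c := by
    intro c
    have hg : Continuous fun y : E => ContinuousMap.mk (fun x : E => x + y)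
        (by continuity) := by
      apply ContinuousMap.continuous_of_continuous_uncurry
      exact (continuous_snd.add continuous_fst)
    exact Continuous.compMeasurePreservingLp continuous_const hg _ ENNReal.ofNat_ne_top
  have hτ0 : ∀ c : Lp ℂ 2 μ, τ 0 c = c := by
    intro c
    apply Lp.ext
    refine (hcoe 0 c).trans (.of_forall fun x => ?_)
    simp
  have hMemsub : ∀ (y : E) (g : Lp ℂ 2 μ),
      MemLp (fun x => (g : E → ℂ) (x + y) - (g : E → ℂ) x) 2 μ := by
    intro y g
    exact ((Lp.memLp (τ y g)).ae_eq (hcoe y g)).sub (Lp.memLp g)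
  have heLp : ∀ (y : E) (g : Lp ℂ 2 μ),
      eLpNorm (fun x => (g : E → ℂ) (x + y) - (g : E → ℂ) x) 2 μ
        = ENNReal.ofReal ‖τ y g - g‖ := by
    intro y g
    rw [Lp.norm_def, ENNReal.ofReal_toReal (Lp.eLpNorm_ne_top _)]
    apply eLpNorm_congr_ae
    filter_upwards [hcoe y g, Lp.coeFn_sub (τ y g) g] with x h1 h2
    rw [h2, Pi.sub_apply, h1]
  constructor
  · -- equicontinuity
    intro ε hε
    set δ' : ℝ := Real.sqrt ε / 4 with hδ'
    have hδp : 0 < δ' := by positivity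
    obtain ⟨t, htfin, hGt⟩ := Metric.totallyBounded_iff.1 hG δ' hδp
    refine ⟨⋂ c ∈ t, (fun y => τ y c) ⁻¹' Metric.ball c δ', ?_, ?_, ?_⟩
    · exact htfin.isOpen_biInter fun c _ =>
        (Metric.isOpen_ball).preimage (hcont c)
    · refine Set.mem_iInter₂.2 fun c _ => ?_
      simp [Set.mem_preimage, hτ0 c, Metric.mem_ball, hδp]
    · intro y hy g hgG
      obtain ⟨c, hct, hgc⟩ := Set.mem_iUnion₂.1 (hGt hgG)
      have hyc : dist (τ y c) c < δ' := Metric.mem_ball.1 (Set.mem_iInter₂.1 hy c hct)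
      have hgc' : dist g c < δ' := Metric.mem_ball.1 hgc
      have hnorm : ‖τ y g - g‖ < 3 * δ' := by
        have h1 : dist (τ y g) g ≤ dist (τ y g) (τ y c) + dist (τ y c) c + dist c g :=
          dist_triangle4 _ _ _ _
        have h2 : dist (τ y g) (τ y c) = dist g c := by
          rw [dist_eq_norm, hτsub, hτnorm, dist_eq_norm]
        have h3 : dist c g = dist g c := dist_comm c g
        have h0 : ‖τ y g - g‖ = dist (τ y g) g := (dist_eq_norm _ _).symm
        linarith
      rw [psq_int_lt_iff (hMemsub y g) hε, heLp y g]
      refine (ENNReal.ofReal_lt_ofReal_iff (Real.sqrt_pos.2 hε)).2 ?_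
      have : (3:ℝ) * δ' < Real.sqrt ε := by
        rw [hδ']; have := Real.sqrt_pos.2 hε; linarith
      linarith
  · -- tightness
    intro ε hε
    set δ' : ℝ := Real.sqrt ε / 4 with hδ'
    have hδp : 0 < δ' := by positivity
    obtain ⟨t, htfin, hGt⟩ := Metric.totallyBounded_iff.1 hG δ' hδp
    have htail : ∀ c ∈ t, ∃ n : ℕ,
        eLpNorm (⇑c : E → ℂ) 2 (μ.restrict (Metric.closedBall (0:E) n)ᶜ)
          < ENNReal.ofReal δ' := by
      intro c _
      obtain ⟨n, hn⟩ := ptail (Lp.memLp c) (show (0:ℝ) < δ' ^ 2 by positivity)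
      refine ⟨n, ?_⟩
      rw [peLp_eq]
      calc (∫⁻ x in (Metric.closedBall (0:E) n)ᶜ, (‖(c : E → ℂ) x‖₊:ℝ≥0∞)^2 ∂μ) ^ (1/2:ℝ)
          < (ENNReal.ofReal (δ' ^ 2)) ^ (1/2:ℝ) := by
            apply ENNReal.rpow_lt_rpow hn (by norm_num)
        _ = ENNReal.ofReal δ' := by
            rw [show (δ':ℝ)^2 = δ' * δ' from sq δ', ENNReal.ofReal_mul hδp.le, ← sq,
              ← ENNReal.rpow_natCast (ENNReal.ofReal δ') 2, ← ENNReal.rpow_mul]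
            norm_num
      
    choose! n hn using htail
    refine ⟨⋃ c ∈ t, Metric.closedBall (0:E) (n c), ?_, ?_⟩
    · exact htfin.isCompact_biUnion fun c _ => isCompact_closedBall _ _
    · intro g hgG
      set K := ⋃ c ∈ t, Metric.closedBall (0:E) (n c)
      obtain ⟨c, hct, hgc⟩ := Set.mem_iUnion₂.1 (hGt hgG)
      have hgc' : ‖g - c‖ < δ' := by rw [← dist_eq_norm]; exact Metric.mem_ball.1 hgc
      rw [psq_int_lt_iff ((Lp.memLp g).restrict _) hε]
      have hsplit : eLpNorm (⇑g : E → ℂ) 2 (μ.restrict Kᶜ)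
          ≤ eLpNorm (⇑g - ⇑c : E → ℂ) 2 (μ.restrict Kᶜ)
            + eLpNorm (⇑c : E → ℂ) 2 (μ.restrict Kᶜ) := by
        have : (⇑g : E → ℂ) = (⇑g - ⇑c) + ⇑c := by ext x; simp
        nth_rewrite 1 [this]
        exact eLpNorm_add_le (((Lp.memLp g).restrict _).sub
          ((Lp.memLp c).restrict _)).aestronglyMeasurable
          ((Lp.memLp c).restrict _).aestronglyMeasurable one_le_two
      have h1 : eLpNorm (⇑g - ⇑c : E → ℂ) 2 (μ.restrict Kᶜ) < ENNReal.ofReal δ' := by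
        refine lt_of_le_of_lt (eLpNorm_mono_measure _ Measure.restrict_le_self) ?_
        have heq : eLpNorm (⇑g - ⇑c : E → ℂ) 2 μ = ENNReal.ofReal ‖g - c‖ := by
          rw [Lp.norm_def, ENNReal.ofReal_toReal (Lp.eLpNorm_ne_top _)]
          exact (eLpNorm_congr_ae (Lp.coeFn_sub g c)).symm
        rw [heq]
        exact (ENNReal.ofReal_lt_ofReal_iff hδp).2 hgc'
      have h2 : eLpNorm (⇑c : E → ℂ) 2 (μ.restrict Kᶜ) < ENNReal.ofReal δ' := by
        refine lt_of_le_of_lt (eLpNorm_mono_measure _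
          (Measure.restrict_mono (Set.compl_subset_compl.2
            (Set.subset_biUnion_of_mem (u := fun c => Metric.closedBall (0:E) (n c)) hct))
            le_rfl)) ?_
        exact hn c hct
      calc eLpNorm (⇑g : E → ℂ) 2 (μ.restrict Kᶜ)
          ≤ _ + _ := hsplit
        _ < ENNReal.ofReal δ' + ENNReal.ofReal δ' := ENNReal.add_lt_add h1 h2
        _ = ENNReal.ofReal (2 * δ') := by
            rw [← ENNReal.ofReal_add hδp.le hδp.le]; ring_nf
        _ < ENNReal.ofReal (Real.sqrt ε) := by
            refine (ENNReal.ofReal_lt_ofReal_iff (Real.sqrt_pos.2 hε)).2 ?_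
            rw [hδ']; have := Real.sqrt_pos.2 hε; linarith

lemma pcoe_sum {α : Type*} [MeasurableSpace α] {ν : Measure α} {ι : Type*} [DecidableEq ι]
    (s : Finset ι) (f : ι → Lp ℂ 2 ν) :
    ⇑(∑ k ∈ s, f k) =ᵐ[ν] fun x => ∑ k ∈ s, (f k : α → ℂ) x := by
  induction s using Finset.induction_on with
  | empty => simp only [Finset.sum_empty]; exact Lp.coeFn_zero ℂ 2 ν
  | @insert a s ha ih =>
    rw [Finset.sum_insert ha]
    refine (Lp.coeFn_add _ _).trans ?_
    filter_upwards [ih] with x hx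
    simp only [Pi.add_apply, hx]
    rw [Finset.sum_insert ha]

lemma pMemtrans {N : ℕ} (g : Lp ℂ 2 (volume : Measure (EuclideanSpace ℝ (Fin N))))
    (y : EuclideanSpace ℝ (Fin N)) :
    MemLp (fun x => (g : EuclideanSpace ℝ (Fin N) → ℂ) (x + y)) 2 volume :=
  (Lp.memLp (Lp.compMeasurePreserving _ (measurePreserving_add_right volume y) g)).ae_eq
    (Lp.coeFn_compMeasurePreserving g _)

lemma pbackward {N : ℕ} (G : Set (Lp ℂ 2 (volume : Measure (EuclideanSpace ℝ (Fin N)))))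
    (hbdd : ∃ M : ℝ, ∀ g ∈ G, ‖g‖ ≤ M)
    (hcond1 : ∀ ε > (0 : ℝ), ∃ U : Set (EuclideanSpace ℝ (Fin N)), IsOpen U ∧ (0 : _) ∈ U ∧
        ∀ y ∈ U, ∀ g ∈ G,
          (∫ x, ‖(g : EuclideanSpace ℝ (Fin N) → ℂ) (x + y) -
            (g : EuclideanSpace ℝ (Fin N) → ℂ) x‖ ^ 2 ∂volume) < ε)
    (hcond2 : ∀ ε > (0 : ℝ), ∃ K : Set (EuclideanSpace ℝ (Fin N)), IsCompact K ∧
        ∀ g ∈ G, (∫ x in Kᶜ, ‖(g : EuclideanSpace ℝ (Fin N) → ℂ) x‖ ^ 2 ∂volume) < ε) :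
    TotallyBounded G := by
  classical
  set E := EuclideanSpace ℝ (Fin N)
  set μ : Measure E := volume with hμdef
  obtain ⟨M, hM⟩ := hbdd
  apply ptb_findim (M := max M 0) (fun g hg => le_max_of_le_left (hM g hg))
  intro ε hε
  -- parameters
  have hε1 : (0:ℝ) < ε^2 / 2^(N+1) := by positivity
  have hε2 : (0:ℝ) < ε^2 / 2 := by positivity
  obtain ⟨U, hUopen, hU0, hU⟩ := hcond1 (ε^2 / 2^(N+1)) hε1
  obtain ⟨r, hr, hball⟩ := Metric.isOpen_iff.1 hUopen 0 hU0
  set δ : ℝ := r / (2 * Real.sqrt N + 2) with hδdef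
  have hsN : (0:ℝ) ≤ Real.sqrt N := Real.sqrt_nonneg N
  have hδ : 0 < δ := by
    apply div_pos hr; positivity
  have hCyU : ∀ y : E, (∀ i, |y i| < δ) → y ∈ U := by
    intro y hy
    apply hball
    rw [Metric.mem_ball, dist_zero_right]
    calc ‖y‖ ≤ Real.sqrt N * δ := pnorm_le y δ hδ.le fun i => (hy i).le
      _ < (2 * Real.sqrt N + 2) * δ := by nlinarith
      _ = r := by rw [hδdef]; field_simp
  obtain ⟨K, hKcomp, hK⟩ := hcond2 (ε^2 / 2) hε2
  obtain ⟨R0, hR0⟩ := hKcomp.isBounded.subset_closedBall 0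
  set R : ℝ := max R0 0 with hRdef
  have hKR : K ⊆ Metric.closedBall 0 R :=
    hR0.trans (Metric.closedBall_subset_closedBall (le_max_left _ _))
  set m : ℕ := ⌈R / δ⌉₊ with hmdef
  have hfloor : ∀ t : ℝ, |t| ≤ R → ⌊t / δ⌋ ∈ Finset.Icc (-(m:ℤ)) (m:ℤ) := by
    intro t ht
    rw [Finset.mem_Icc]
    obtain ⟨h1, h2⟩ := abs_le.1 ht
    have hm : R / δ ≤ (m:ℝ) := Nat.le_ceil _
    have hdiv : t / δ ≤ R / δ := (div_le_div_iff_of_pos_right hδ).2 h2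
    have hdiv2 : -R / δ ≤ t / δ := (div_le_div_iff_of_pos_right hδ).2 h1
    constructor
    · exact Int.le_floor.2 (by push_cast; rw [neg_div] at hdiv2; linarith)
    · calc ⌊t / δ⌋ ≤ ⌊(m:ℝ)⌋ := Int.floor_mono (by linarith)
        _ = m := Int.floor_natCast m
  -- the grid
  set I : Finset (Fin N → ℤ) := Fintype.piFinset fun _ => Finset.Icc (-(m:ℤ)) (m:ℤ) with hIdef
  set kf : E → (Fin N → ℤ) := fun x i => ⌊x i / δ⌋ with hkfdef
  set Q : (Fin N → ℤ) → Set E :=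
    fun k => {x : E | ∀ i, x i ∈ Set.Ico (k i * δ) ((k i + 1) * δ)} with hQdef
  have hQ_iff : ∀ (x : E) k, x ∈ Q k ↔ kf x = k := fun x k => pgrid δ hδ k x
  have hxQ : ∀ x : E, x ∈ Q (kf x) := fun x => (hQ_iff x (kf x)).2 rfl
  have hQmeas : ∀ k, MeasurableSet (Q k) := fun k => pQmeas δ k
  set A : ℝ≥0∞ := ENNReal.ofReal δ ^ N with hAdef
  have hQvol : ∀ k, μ (Q k) = A := fun k => pQvol δ hδ k
  have hA0 : A ≠ 0 := pow_ne_zero N (ENNReal.ofReal_pos.2 hδ).ne'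
  have hAtop : A ≠ ∞ := (ENNReal.pow_lt_top ENNReal.ofReal_lt_top).ne
  have hQfin : ∀ k, μ (Q k) ≠ ∞ := fun k => (hQvol k) ▸ hAtop
  set S : Set E := ⋃ k ∈ I, Q k with hSdef
  have hSmeas : MeasurableSet S := I.measurableSet_biUnion fun k _ => hQmeas k
  have hSmem : ∀ x : E, x ∈ S ↔ kf x ∈ I := by
    intro x
    constructor
    · intro hx
      obtain ⟨k, hkI, hxk⟩ := Set.mem_iUnion₂.1 hx
      rwa [← (hQ_iff x k).1 hxk] at hkI
    · intro h
      exact Set.mem_iUnion₂.2 ⟨kf x, h, hxQ x⟩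
  have hKS : K ⊆ S := by
    intro x hx
    rw [hSmem, hIdef, Fintype.mem_piFinset]
    intro i
    apply hfloor
    exact (pcoord_le_norm x i).trans (by simpa [dist_zero_right] using hKR hx)
  set Cy : Set E := {y : E | ∀ i, |y i| < δ} with hCydef
  have hCymeas : MeasurableSet Cy := pCymeas δ
  have hCyvol : μ Cy = ENNReal.ofReal (2*δ) ^ N := pCyvol δ hδ
  -- indicator Lp elements and the subspace
  set e : (Fin N → ℤ) → Lp ℂ 2 μ :=
    fun k => indicatorConstLp 2 (hQmeas k) (hQfin k) (1:ℂ) with hedef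
  refine ⟨Submodule.span ℂ (e '' ↑I), ?_, ?_⟩
  · exact FiniteDimensional.span_of_finite ℂ (I.finite_toSet.image e)
  intro g hgG
  -- measurable representative
  have hgmem : MemLp (⇑g : E → ℂ) 2 μ := Lp.memLp g
  set g' : E → ℂ := hgmem.aestronglyMeasurable.mk ⇑g with hg'def
  have hg'm : StronglyMeasurable g' := hgmem.aestronglyMeasurable.stronglyMeasurable_mk
  have hgg' : (⇑g : E → ℂ) =ᵐ[μ] g' := hgmem.aestronglyMeasurable.ae_eq_mk
  have hg'mem : MemLp g' 2 μ := hgmem.ae_eq hgg'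
  -- coefficients
  haveI hQfinmeas : ∀ k, IsFiniteMeasure (μ.restrict (Q k)) := by
    intro k
    constructor
    rw [Measure.restrict_apply_univ, hQvol k]
    exact hAtop.lt_top
  have hgint : ∀ k, IntegrableOn g' (Q k) μ := by
    intro k
    haveI := hQfinmeas k
    exact (hg'mem.restrict (Q k)).integrable one_le_two
  set c : (Fin N → ℤ) → ℂ := fun k => (δ^N : ℝ)⁻¹ • ∫ z in Q k, (g : E → ℂ) z ∂μ with hcdef
  have hδN : (0:ℝ) < δ ^ N := pow_pos hδ N
  have hc : ∀ k, (∫ z in Q k, g' z ∂μ) = (δ^N : ℝ) • c k := by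
    intro k
    have h1 : (∫ z in Q k, g' z ∂μ) = ∫ z in Q k, (g : E → ℂ) z ∂μ :=
      setIntegral_congr_ae (hQmeas k) (hgg'.mono fun x hx _ => hx.symm)
    rw [h1, hcdef, smul_smul, mul_inv_cancel₀ hδN.ne', one_smul]
  set v : Lp ℂ 2 μ := ∑ k ∈ I, c k • e k with hvdef
  have hvV : v ∈ Submodule.span ℂ (e '' ↑I) := by
    apply Submodule.sum_mem
    intro k hk
    exact Submodule.smul_mem _ _ (Submodule.subset_span ⟨k, hk, rfl⟩)
  set P : E → ℂ := fun x => if kf x ∈ I then c (kf x) else 0 with hPdef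
  have hvcoe : ⇑v =ᵐ[μ] P := by
    have hterm : ∀ᵐ x ∂μ, ∀ k, k ∈ I → (c k • e k : Lp ℂ 2 μ) x
        = (Q k).indicator (fun _ => c k) x := by
      rw [ae_all_iff]
      intro k
      filter_upwards [Lp.coeFn_smul (c k) (e k),
        indicatorConstLp_coeFn (p := 2) (hs := hQmeas k) (hμs := hQfin k) (c := (1:ℂ))]
        with x h1 h2
      intro _
      rw [h1, Pi.smul_apply, h2]
      by_cases hx : x ∈ Q k
      · simp [Set.indicator_of_mem hx]
      · simp [Set.indicator_of_notMem hx]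
    filter_upwards [pcoe_sum I (fun k => c k • e k), hterm] with x h1 h2
    rw [show ⇑v x = (∑ k ∈ I, c k • e k : Lp ℂ 2 μ) x from rfl, h1]
    have h3 : ∀ k ∈ I, (Q k).indicator (fun _ => c k) x = if k = kf x then c k else 0 := by
      intro k _
      rw [Set.indicator_apply]
      apply if_congr _ rfl rfl
      rw [hQ_iff x k]
      exact ⟨fun h => h.symm, fun h => h.symm⟩
    rw [Finset.sum_congr rfl fun k hk => (h2 k hk).trans (h3 k hk),
      Finset.sum_ite_eq' I (kf x) c]
  
  -- main estimate
  refine ⟨v, hvV, ?_⟩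
  have hDbound : ∀ y ∈ U, (∫⁻ x, (‖(g : E → ℂ) (x+y) - (g : E → ℂ) x‖₊ : ℝ≥0∞)^2 ∂μ)
      ≤ ENNReal.ofReal (ε^2 / 2^(N+1)) := by
    intro y hy
    have hmem2 : MemLp (fun x => (g : E → ℂ) (x+y) - (g : E → ℂ) x) 2 μ :=
      (pMemtrans g y).sub hgmem
    rw [pD_ofReal hmem2]
    exact ENNReal.ofReal_le_ofReal (hU y hy g hgG).le
  set W : E → E → ℝ≥0∞ :=
    fun x z => Cy.indicator (fun _ => (1:ℝ≥0∞)) (z - x) * (‖g' x - g' z‖₊:ℝ≥0∞)^2 with hWdef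
  have hstep1 : ∀ x : E, (∫⁻ z in Q (kf x), (‖g' x - g' z‖₊:ℝ≥0∞)^2 ∂μ) ≤ ∫⁻ z, W x z ∂μ := by
    intro x
    rw [← lintegral_indicator (hQmeas (kf x))]
    apply lintegral_mono
    intro z
    by_cases hz : z ∈ Q (kf x)
    · rw [Set.indicator_of_mem hz]
      have hmemCy : z - x ∈ Cy := by
        intro i
        have h1 := hz i
        have h2 := hxQ x i
        have hsub : (z - x) i = z i - x i := rfl
        rw [hsub]
        simp only [Set.mem_Ico] at h1 h2
        rw [abs_lt]
        constructor <;> nlinarith [h1.1, h1.2, h2.1, h2.2]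
      simp only [hWdef, Set.indicator_of_mem hmemCy, one_mul, le_refl]
    · rw [Set.indicator_of_notMem hz]
      exact zero_le
  have hstep2 : ∀ x : E, (∫⁻ z, W x z ∂μ)
      = ∫⁻ y, Cy.indicator (fun _ => (1:ℝ≥0∞)) y * (‖g' x - g' (x + y)‖₊:ℝ≥0∞)^2 ∂μ := by
    intro x
    rw [← lintegral_add_left_eq_self (fun z => W x z) x]
    apply lintegral_congr
    intro y
    simp only [hWdef, add_sub_cancel_left]
  have hswap : (∫⁻ x, ∫⁻ y, Cy.indicator (fun _ => (1:ℝ≥0∞)) y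
        * (‖g' x - g' (x+y)‖₊:ℝ≥0∞)^2 ∂μ ∂μ)
      = ∫⁻ y, ∫⁻ x, Cy.indicator (fun _ => (1:ℝ≥0∞)) y
        * (‖g' x - g' (x+y)‖₊:ℝ≥0∞)^2 ∂μ ∂μ := by
    apply lintegral_lintegral_swap
    apply Measurable.aemeasurable
    apply Measurable.mul
    · exact (measurable_const.indicator hCymeas).comp measurable_snd
    · exact (((hg'm.measurable.comp measurable_fst).sub
        (hg'm.measurable.comp (measurable_fst.add measurable_snd))).nnnorm.coe_nnreal_ennreal).pow_const 2
  have hybound : ∀ y : E, (∫⁻ x, Cy.indicator (fun _ => (1:ℝ≥0∞)) y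
        * (‖g' x - g' (x+y)‖₊:ℝ≥0∞)^2 ∂μ)
      ≤ Cy.indicator (fun _ => ENNReal.ofReal (ε^2 / 2^(N+1))) y := by
    intro y
    by_cases hy : y ∈ Cy
    · rw [Set.indicator_of_mem hy]
      simp only [Set.indicator_of_mem hy, one_mul]
      have hshift : (fun x => g' (x + y)) =ᵐ[μ] fun x => (g : E → ℂ) (x + y) := by
        refine ae_eq_comp' (f := fun x => x + y) (measurable_add_const y).aemeasurable
          hgg'.symm ?_
        rw [(measurePreserving_add_right μ y).map_eq]
      have hcongr2 : (fun x => (‖g' x - g' (x+y)‖₊:ℝ≥0∞)^2)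
          =ᵐ[μ] fun x => (‖(g : E → ℂ) (x+y) - (g : E → ℂ) x‖₊:ℝ≥0∞)^2 := by
        filter_upwards [hshift, hgg'] with x h1 h2
        have h3 : ‖g' x - g' (x+y)‖₊ = ‖g' (x+y) - g' x‖₊ := by
          rw [← neg_sub, nnnorm_neg]
        rw [h3, ← h1, ← h2]
      rw [lintegral_congr_ae hcongr2]
      exact hDbound y (hCyU y hy)
    · simp [Set.indicator_of_notMem hy]
  have hT1 : (∫⁻ x in S, (‖(g : E → ℂ) x - P x‖₊:ℝ≥0∞)^2 ∂μ) ≤ ENNReal.ofReal (ε^2/2) := by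
    have e1 : (∫⁻ x in S, (‖(g : E → ℂ) x - P x‖₊:ℝ≥0∞)^2 ∂μ)
        = ∫⁻ x in S, (‖g' x - c (kf x)‖₊:ℝ≥0∞)^2 ∂μ := by
      apply lintegral_congr_ae
      filter_upwards [ae_restrict_of_ae hgg', ae_restrict_mem hSmeas] with x h1 h2
      rw [h1]
      simp only [hPdef]
      rw [if_pos ((hSmem x).1 h2)]
    rw [e1]
    calc (∫⁻ x in S, (‖g' x - c (kf x)‖₊:ℝ≥0∞)^2 ∂μ)
        ≤ ∫⁻ x in S, A⁻¹ * ∫⁻ z in Q (kf x), (‖g' x - g' z‖₊:ℝ≥0∞)^2 ∂μ ∂μ :=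
          lintegral_mono fun x => pjensen hδ (kf x) hg'm (hgint (kf x)) (c (kf x)) (hc (kf x)) x
      _ = A⁻¹ * ∫⁻ x in S, (∫⁻ z in Q (kf x), (‖g' x - g' z‖₊:ℝ≥0∞)^2 ∂μ) ∂μ :=
          lintegral_const_mul' _ _ (ENNReal.inv_ne_top.2 hA0)
      _ ≤ A⁻¹ * ∫⁻ x in S, (∫⁻ z, W x z ∂μ) ∂μ :=
          mul_le_mul_right (lintegral_mono fun x => hstep1 x) _
      _ ≤ A⁻¹ * ∫⁻ x, (∫⁻ z, W x z ∂μ) ∂μ :=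
          mul_le_mul_right (setLIntegral_le_lintegral _ _) _
      _ = A⁻¹ * ∫⁻ x, ∫⁻ y, Cy.indicator (fun _ => (1:ℝ≥0∞)) y
            * (‖g' x - g' (x+y)‖₊:ℝ≥0∞)^2 ∂μ ∂μ := by
          rw [lintegral_congr hstep2]
      _ = A⁻¹ * ∫⁻ y, ∫⁻ x, Cy.indicator (fun _ => (1:ℝ≥0∞)) y
            * (‖g' x - g' (x+y)‖₊:ℝ≥0∞)^2 ∂μ ∂μ := by rw [hswap]
      _ ≤ A⁻¹ * ∫⁻ y, Cy.indicator (fun _ => ENNReal.ofReal (ε^2 / 2^(N+1))) y ∂μ :=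
          mul_le_mul_right (lintegral_mono hybound) _
      _ = A⁻¹ * (ENNReal.ofReal (ε^2 / 2^(N+1)) * μ Cy) := by
          rw [lintegral_indicator_const hCymeas]
      _ = ENNReal.ofReal (ε^2/2) := by
          rw [hCyvol]
          have h2d : ENNReal.ofReal (2*δ) ^ N = ENNReal.ofReal (2:ℝ) ^ N * A := by
            rw [ENNReal.ofReal_mul (by norm_num : (0:ℝ) ≤ 2), mul_pow]
          rw [h2d]
          calc A⁻¹ * (ENNReal.ofReal (ε^2 / 2^(N+1)) * (ENNReal.ofReal 2 ^ N * A))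
              = (A⁻¹ * A) * (ENNReal.ofReal 2 ^ N * ENNReal.ofReal (ε^2 / 2^(N+1))) := by
                ring
            _ = ENNReal.ofReal 2 ^ N * ENNReal.ofReal (ε^2 / 2^(N+1)) := by
                rw [ENNReal.inv_mul_cancel hA0 hAtop, one_mul]
            _ = ENNReal.ofReal ((2:ℝ)^N * (ε^2 / 2^(N+1))) := by
                rw [← ENNReal.ofReal_pow (by norm_num : (0:ℝ) ≤ 2),
                  ← ENNReal.ofReal_mul (by positivity)]
            _ = ENNReal.ofReal (ε^2/2) := by
                congr 1
                rw [pow_succ]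
                field_simp
                ring
  have hT2 : (∫⁻ x in Sᶜ, (‖(g : E → ℂ) x - P x‖₊:ℝ≥0∞)^2 ∂μ) ≤ ENNReal.ofReal (ε^2/2) := by
    have e1 : (∫⁻ x in Sᶜ, (‖(g : E → ℂ) x - P x‖₊:ℝ≥0∞)^2 ∂μ)
        = ∫⁻ x in Sᶜ, (‖(g : E → ℂ) x‖₊:ℝ≥0∞)^2 ∂μ := by
      apply lintegral_congr_ae
      filter_upwards [ae_restrict_mem hSmeas.compl] with x hx
      have hnot : kf x ∉ I := fun h => hx ((hSmem x).2 h)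
      simp only [hPdef]
      rw [if_neg hnot, sub_zero]
    rw [e1]
    calc (∫⁻ x in Sᶜ, (‖(g : E → ℂ) x‖₊:ℝ≥0∞)^2 ∂μ)
        ≤ ∫⁻ x in Kᶜ, (‖(g : E → ℂ) x‖₊:ℝ≥0∞)^2 ∂μ :=
          lintegral_mono_set (Set.compl_subset_compl.2 hKS)
      _ = ENNReal.ofReal (∫ x in Kᶜ, ‖(g : E → ℂ) x‖^2 ∂μ) := pD_ofReal (hgmem.restrict _)
      _ ≤ ENNReal.ofReal (ε^2/2) := ENNReal.ofReal_le_ofReal (hK g hgG).le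
  rw [Lp.norm_def]
  apply ENNReal.toReal_le_of_le_ofReal hε.le
  have hcoesub : ⇑(g - v) =ᵐ[μ] fun x => (g : E → ℂ) x - P x := by
    filter_upwards [Lp.coeFn_sub g v, hvcoe] with x h1 h2
    rw [h1, Pi.sub_apply, h2]
  rw [eLpNorm_congr_ae hcoesub, peLp_eq]
  have hsum : (∫⁻ x, (‖(g : E → ℂ) x - P x‖₊:ℝ≥0∞)^2 ∂μ) ≤ ENNReal.ofReal (ε^2) := by
    rw [← lintegral_add_compl (fun x => (‖(g : E → ℂ) x - P x‖₊:ℝ≥0∞)^2) hSmeas]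
    calc _ ≤ ENNReal.ofReal (ε^2/2) + ENNReal.ofReal (ε^2/2) := add_le_add hT1 hT2
      _ = ENNReal.ofReal (ε^2) := by
          rw [← ENNReal.ofReal_add (by positivity) (by positivity)]
          congr 1
          ring
  calc (∫⁻ x, (‖(g : E → ℂ) x - P x‖₊:ℝ≥0∞)^2 ∂μ) ^ (1/2:ℝ)
      ≤ (ENNReal.ofReal (ε^2)) ^ (1/2:ℝ) := ENNReal.rpow_le_rpow hsum (by norm_num)
    _ = ENNReal.ofReal ε := by
        rw [show (ε:ℝ)^2 = ε*ε from sq ε, ENNReal.ofReal_mul hε.le, ← sq,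
          ← ENNReal.rpow_natCast (ENNReal.ofReal ε) 2, ← ENNReal.rpow_mul]
        norm_num


/-- **Classical Pego theorem.** A bounded family `F ⊆ L²(ℝ^N)` is relatively compact if and
only if the family of (Plancherel) Fourier transforms `F̂` is `L²`-equicontinuous and
`L²`-equivanishing.  Here `T` is the Fourier–Plancherel transform, i.e. the linear isometry on
`L²(ℝ^N)` which agrees with the Fourier integral `𝓕 f` on `L¹ ∩ L²`. -/
theorem pego_classical {N : ℕ}
    (T : Lp ℂ 2 (volume : Measure (EuclideanSpace ℝ (Fin N))) →ₗᵢ[ℂ]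
      Lp ℂ 2 (volume : Measure (EuclideanSpace ℝ (Fin N))))
    (hT : ∀ (f : EuclideanSpace ℝ (Fin N) → ℂ) (hf1 : Integrable f volume)
      (hf2 : MemLp f 2 volume), (T (hf2.toLp f) : EuclideanSpace ℝ (Fin N) → ℂ) =ᵐ[volume] 𝓕 f)
    (F : Set (Lp ℂ 2 (volume : Measure (EuclideanSpace ℝ (Fin N)))))
    (hbdd : ∃ M : ℝ, ∀ f ∈ F, ‖f‖ ≤ M) :
    IsCompact (closure F) ↔
      ((∀ ε > (0 : ℝ), ∃ U : Set (EuclideanSpace ℝ (Fin N)), IsOpen U ∧ (0 : _) ∈ U ∧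
          ∀ y ∈ U, ∀ f ∈ F,
            (∫ x, ‖(T f : EuclideanSpace ℝ (Fin N) → ℂ) (x + y) -
              (T f : EuclideanSpace ℝ (Fin N) → ℂ) x‖ ^ 2 ∂volume) < ε) ∧
        (∀ ε > (0 : ℝ), ∃ K : Set (EuclideanSpace ℝ (Fin N)), IsCompact K ∧
          ∀ f ∈ F, (∫ x in Kᶜ, ‖(T f : EuclideanSpace ℝ (Fin N) → ℂ) x‖ ^ 2 ∂volume) < ε)) := by
  have key : IsCompact (closure F) ↔ TotallyBounded F :=
    ⟨fun h => h.totallyBounded.subset subset_closure,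
     fun h => h.closure.isCompact_of_isClosed isClosed_closure⟩
  have himg : TotallyBounded F ↔ TotallyBounded (⇑T '' F) :=
    (totallyBounded_image_iff T.isometry.isUniformInducing).symm
  rw [key, himg]
  constructor
  · intro h
    obtain ⟨hc1, hc2⟩ := pforward (⇑T '' F) h
    constructor
    · intro ε hε
      obtain ⟨U, hU1, hU2, hU3⟩ := hc1 ε hε
      exact ⟨U, hU1, hU2, fun y hy f hf => hU3 y hy (T f) (Set.mem_image_of_mem _ hf)⟩
    · intro ε hε
      obtain ⟨K, hK1, hK2⟩ := hc2 ε hε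
      exact ⟨K, hK1, fun f hf => hK2 (T f) (Set.mem_image_of_mem _ hf)⟩
  · rintro ⟨h1, h2⟩
    apply pbackward
    · obtain ⟨M, hM⟩ := hbdd
      exact ⟨M, by rintro g ⟨f, hf, rfl⟩; rw [T.norm_map]; exact hM f hf⟩
    · intro ε hε
      obtain ⟨U, hU1, hU2, hU3⟩ := h1 ε hε
      exact ⟨U, hU1, hU2, by rintro y hy g ⟨f, hf, rfl⟩; exact hU3 y hy f hf⟩
    · intro ε hε
      obtain ⟨K, hK1, hK2⟩ := h2 ε hε
      exact ⟨K, hK1, by rintro g ⟨f, hf, rfl⟩; exact hK2 f hf⟩
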